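/- The function g(x,y) = (1+y)^x - (y/2)^x, for fixed x with 0 ≤ x ≤ 1/2, is monotonically decreasing in y on (0,1]. -/

import Mathlib

open Real

lemma deriv_key (x : ℝ) (hx0 : 0 ≤ x) (hx : x ≤ 1 / 2) {y : ℝ} (hy : 0 < y) (hy1 : y ≤ 1) :
    x * (1 + y) ^ (x - 1) * 1 - x * (y / 2) ^ (x - 1) * (1 / 2) ≤ 0 := by
  rcases eq_or_lt_of_le hx0 with h | hxpos
  · simp [← h]
  have h1 : (1 + y) ^ (x - 1) ≤ (2 * y) ^ (x - 1) :=
    Real.rpow_le_rpow_of_nonpos (by linarith) (by linarith) (by linarith)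
  have h2 : (2 * y : ℝ) = 4 * (y / 2) := by ring
  have h3 : ((2 : ℝ) * y) ^ (x - 1) = (4 : ℝ) ^ (x - 1) * (y / 2) ^ (x - 1) := by
    rw [h2, Real.mul_rpow (by norm_num) (by positivity)]
  have h4 : (4 : ℝ) ^ (x - 1) ≤ 1 / 2 := by
    have e4 : (4 : ℝ) = (2 : ℝ) ^ (2 : ℝ) := by
      rw [show (2 : ℝ) ^ (2 : ℝ) = (2 : ℝ) ^ (2 : ℕ) by
        rw [← Real.rpow_natCast]; norm_num]
      norm_num
    have : (4 : ℝ) ^ (x - 1) = (2 : ℝ) ^ (2 * (x - 1)) := by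
      rw [e4, ← Real.rpow_mul (by norm_num)]
    rw [this]
    have := Real.rpow_le_rpow_of_exponent_le (by norm_num : (1:ℝ) ≤ 2)
      (by linarith : 2 * (x - 1) ≤ (-1 : ℝ))
    calc (2:ℝ) ^ (2 * (x - 1)) ≤ (2 : ℝ) ^ (-1 : ℝ) := this
      _ = 1 / 2 := by rw [Real.rpow_neg_one]; norm_num
  have hpos : (0 : ℝ) < (y / 2) ^ (x - 1) := Real.rpow_pos_of_pos (by linarith) _
  have : (1 + y) ^ (x - 1) ≤ (y / 2) ^ (x - 1) * (1 / 2) := by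
    calc (1 + y) ^ (x - 1) ≤ (4 : ℝ) ^ (x - 1) * (y / 2) ^ (x - 1) := by rw [← h3]; exact h1
      _ ≤ (1 / 2) * (y / 2) ^ (x - 1) := by
          exact mul_le_mul_of_nonneg_right h4 hpos.le
      _ = (y / 2) ^ (x - 1) * (1 / 2) := by ring
  nlinarith [mul_le_mul_of_nonneg_left this hxpos.le]

theorem stmt_3 (x : ℝ) (hx0 : 0 ≤ x) (hx : x ≤ 1 / 2) :
    ∀ y₁ y₂ : ℝ, 0 < y₁ → y₁ ≤ y₂ → y₂ ≤ 1 →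
      (1 + y₂) ^ x - (y₂ / 2) ^ x ≤ (1 + y₁) ^ x - (y₁ / 2) ^ x := by
  intro y₁ y₂ hy1 h12 hy2
  set f : ℝ → ℝ := fun y => (1 + y) ^ x - (y / 2) ^ x with hf
  have hanti : AntitoneOn f (Set.Icc y₁ y₂) := by
    have key : ∀ y ∈ interior (Set.Icc y₁ y₂),
        HasDerivAt f (x * (1 + y) ^ (x - 1) * 1 - x * (y / 2) ^ (x - 1) * (1 / 2)) y ∧
        x * (1 + y) ^ (x - 1) * 1 - x * (y / 2) ^ (x - 1) * (1 / 2) ≤ 0 := by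
      intro y hy
      rw [interior_Icc] at hy
      have hy0 : 0 < y := lt_trans hy1 hy.1
      have hyle : y ≤ 1 := le_trans hy.2.le hy2
      have d1 : HasDerivAt (fun y : ℝ => (1 + y) ^ x) (x * (1 + y) ^ (x - 1) * 1) y := by
        have hb : HasDerivAt (fun y : ℝ => 1 + y) 1 y := by
          simpa using (hasDerivAt_id y).const_add 1
        exact (Real.hasDerivAt_rpow_const (p := x) (Or.inl (by linarith))).comp y hb
      have d2 : HasDerivAt (fun y : ℝ => (y / 2) ^ x) (x * (y / 2) ^ (x - 1) * (1 / 2)) y := by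
        have hb : HasDerivAt (fun y : ℝ => y / 2) (1 / 2) y := by
          simpa using (hasDerivAt_id y).div_const 2
        have := (Real.hasDerivAt_rpow_const (p := x)
          (Or.inl (by positivity : (y / 2 : ℝ) ≠ 0))).comp y hb
        exact this
      have hd : HasDerivAt f (x * (1 + y) ^ (x - 1) * 1 - x * (y / 2) ^ (x - 1) * (1 / 2)) y :=
        d1.sub d2
      exact ⟨hd, deriv_key x hx0 hx hy0 hyle⟩
    apply antitoneOn_of_deriv_nonpos (convex_Icc y₁ y₂)
    · apply ContinuousOn.sub
      · apply ContinuousOn.rpow_const ((continuous_const.add continuous_id).continuousOn)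
        intro y hy; exact Or.inr hx0
      · apply ContinuousOn.rpow_const ((continuous_id.div_const 2).continuousOn)
        intro y hy; exact Or.inr hx0
    · intro y hy
      exact ((key y hy).1.differentiableAt).differentiableWithinAt
    · intro y hy
      rw [(key y hy).1.deriv]
      exact (key y hy).2
  have := hanti (Set.mem_Icc.mpr ⟨le_refl y₁, h12⟩) (Set.mem_Icc.mpr ⟨h12, le_refl y₂⟩) h12
  simpa [hf] using this
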